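/- Let S_0, S_1, ..., S_n be a time-homogeneous Markov chain on a finite state space 𝒮 with transition matrix P. Assume P is irreducible and P(s,s) ≥ η > 0 for all s ∈ 𝒮. Let J = {i ∈ {1,...,n} : S_i ≠ S_{i−1}} denote the set of jump times. Then there exist a natural number n₀ and a real δ > 0 (depending only on P and η, not on n) such that for every n ≥ n₀ and all states s₀, s_n ∈ 𝒮 with P(S_0 = s₀, S_n = s_n) > 0, the conditional expectation satisfies E(|J| | S_0 = s₀, S_n = s_n) ≤ (1 − δ)·n. -/

import Mathlib

/-- The probability of a path `f : Fin (n+1) → S` under a time-homogeneous Markov chain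
with initial distribution `ν` and transition matrix `P`. -/
noncomputable def mjpPathWeight {S : Type*} [Fintype S] (n : ℕ) (ν : S → ℝ)
    (P : Matrix S S ℝ) (f : Fin (n + 1) → S) : ℝ :=
  ν (f 0) * ∏ i : Fin n, P (f i.castSucc) (f i.succ)

open Classical in
/-- Probability of the event `E` under the Markov chain path distribution. -/
noncomputable def mjpProb {S : Type*} [Fintype S] (n : ℕ) (ν : S → ℝ)
    (P : Matrix S S ℝ) (E : (Fin (n + 1) → S) → Prop) : ℝ :=
  ∑ f : Fin (n + 1) → S, if E f then mjpPathWeight n ν P f else 0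

open Classical in
/-- Conditional expectation of `g` given the event `E` under the Markov chain
path distribution. -/
noncomputable def mjpCondExp {S : Type*} [Fintype S] (n : ℕ) (ν : S → ℝ)
    (P : Matrix S S ℝ) (g : (Fin (n + 1) → S) → ℝ) (E : (Fin (n + 1) → S) → Prop) : ℝ :=
  (∑ f : Fin (n + 1) → S, if E f then g f * mjpPathWeight n ν P f else 0) / mjpProb n ν P E

/-- `|J|`: the number of indices `i ∈ {1,…,n}` with `S_i ≠ S_{i-1}` along the path `f`. -/
def numJumps {S : Type*} [DecidableEq S] (n : ℕ) (f : Fin (n + 1) → S) : ℕ :=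
  (Finset.univ.filter fun i : Fin n => f i.succ ≠ f i.castSucc).card


open Finset

private lemma path_sum {S : Type*} [Fintype S] [DecidableEq S] (n : ℕ)
    (Q : Fin n → Matrix S S ℝ) (a b : S) :
    (∑ f : Fin (n + 1) → S,
      if f 0 = a ∧ f (Fin.last n) = b then ∏ i : Fin n, Q i (f i.castSucc) (f i.succ) else 0)
      = (List.ofFn Q).prod a b := by
  classical
  induction n generalizing a b with
  | zero =>
      rw [Fintype.sum_equiv (Equiv.funUnique (Fin 1) S) _
            (fun s => if s = a ∧ s = b then 1 else 0)
            (by intro f; simp [Fin.last])]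
      simp [Matrix.one_apply, ite_and, Finset.sum_ite_eq']
  | succ n ih =>
      rw [Fintype.sum_equiv (Fin.consEquiv fun _ : Fin (n+2) => S).symm
            (fun f : Fin (n+2) → S => if f 0 = a ∧ f (Fin.last (n+1)) = b then
              ∏ i : Fin (n+1), Q i (f i.castSucc) (f i.succ) else 0)
            (fun p : S × (Fin (n+1) → S) =>
              if p.1 = a ∧ p.2 (Fin.last n) = b then
                Q 0 p.1 (p.2 0) * ∏ i : Fin n, Q i.succ (p.2 i.castSucc) (p.2 i.succ) else 0)
            (by
              intro f
              simp only [Fin.consEquiv_symm_apply, Fin.tail,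
                Fin.prod_univ_succ, Fin.castSucc_zero, ← Fin.succ_castSucc, Fin.succ_last]),
          Fintype.sum_prod_type]
      simp only [ite_and]
      rw [Finset.sum_comm]
      simp only [Finset.sum_ite_eq' Finset.univ a, Finset.mem_univ, if_true]
      have expand : ∀ g : Fin (n+1) → S,
          (if g (Fin.last n) = b then
              Q 0 a (g 0) * ∏ i : Fin n, Q i.succ (g i.castSucc) (g i.succ) else 0)
          = ∑ c : S, Q 0 a c * (if g 0 = c ∧ g (Fin.last n) = b then
              ∏ i : Fin n, Q i.succ (g i.castSucc) (g i.succ) else 0) := by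
        intro g
        simp only [mul_ite, mul_zero, ite_and]
        rw [Finset.sum_ite_eq Finset.univ (g 0)
          (fun c => if g (Fin.last n) = b then Q 0 a c * _ else 0)]
        simp
      rw [Finset.sum_congr rfl fun g _ => expand g, Finset.sum_comm]
      have key2 : ∀ c : S, (∑ g : Fin (n+1) → S, Q 0 a c *
          (if g 0 = c ∧ g (Fin.last n) = b then
            ∏ i : Fin n, Q i.succ (g i.castSucc) (g i.succ) else 0))
          = Q 0 a c * (List.ofFn fun i : Fin n => Q i.succ).prod c b := by
        intro c
        rw [← Finset.mul_sum, ih]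
      rw [Finset.sum_congr rfl fun c _ => key2 c]
      rw [List.ofFn_succ, List.prod_cons, Matrix.mul_apply]

private lemma ofFn_ite_prod {S : Type*} [Fintype S] [DecidableEq S] (P B : Matrix S S ℝ) :
    ∀ (n k : ℕ), k < n →
      (List.ofFn fun i : Fin n => if (i : ℕ) = k then B else P).prod
        = P ^ k * B * P ^ (n - 1 - k)
  | 0, k, hk => by omega
  | (n+1), 0, _ => by
      rw [List.ofFn_succ, List.prod_cons]
      simp only [Fin.val_zero, if_pos rfl, Fin.val_succ, Nat.succ_ne_zero, if_false,
        Nat.add_sub_cancel, pow_zero, one_mul]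
      have : (List.ofFn fun _ : Fin n => P).prod = P ^ n := by
        rw [List.ofFn_const, List.prod_replicate]
      simp [this]
  | (n+1), (k+1), hk => by
      rw [List.ofFn_succ, List.prod_cons]
      simp only [Fin.val_zero, Fin.val_succ]
      simp only [eq_false (by omega : ¬ ((0:ℕ) = k + 1)), ite_false]
      have h1 : (List.ofFn fun i : Fin n => if (i : ℕ) + 1 = k + 1 then B else P).prod
          = P ^ k * B * P ^ (n - 1 - k) := by
        have : (fun i : Fin n => if (i : ℕ) + 1 = k + 1 then B else P)
            = fun i : Fin n => if (i : ℕ) = k then B else P := by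
          funext i; simp [Nat.succ_inj]
        rw [this, ofFn_ite_prod P B n k (by omega)]
      rw [h1, show n + 1 - 1 - (k + 1) = n - 1 - k by omega,
        ← mul_assoc, ← mul_assoc, ← pow_succ']

section
variable {S : Type*} [Fintype S] [DecidableEq S] (P : Matrix S S ℝ)
  (hPnn : ∀ s s' : S, 0 ≤ P s s') (hProw : ∀ s : S, ∑ s' : S, P s s' = 1)

include hPnn in
private lemma pow_entry_nonneg : ∀ (k : ℕ) (s s' : S), 0 ≤ (P ^ k) s s'
  | 0, s, s' => by
      rw [pow_zero, Matrix.one_apply]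
      split <;> norm_num
  | (k+1), s, s' => by
      rw [pow_succ, Matrix.mul_apply]
      exact Finset.sum_nonneg fun t _ => mul_nonneg (pow_entry_nonneg k s t) (hPnn t s')

include hProw in
private lemma pow_row_sum : ∀ (k : ℕ) (s : S), ∑ s' : S, (P ^ k) s s' = 1
  | 0, s => by simp [Matrix.one_apply]
  | (k+1), s => by
      simp only [pow_succ, Matrix.mul_apply]
      rw [Finset.sum_comm]
      calc ∑ t : S, ∑ s' : S, (P ^ k) s t * P t s'
          = ∑ t : S, (P ^ k) s t * ∑ s' : S, P t s' := by
            simp [Finset.mul_sum]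
        _ = 1 := by simp only [hProw, mul_one]; exact pow_row_sum k s

include hPnn hProw in
private lemma pow_entry_le_one (k : ℕ) (s s' : S) : (P ^ k) s s' ≤ 1 := by
  calc (P ^ k) s s' ≤ ∑ t : S, (P ^ k) s t :=
        Finset.single_le_sum (fun t _ => pow_entry_nonneg P hPnn k s t) (Finset.mem_univ s')
    _ = 1 := pow_row_sum P hProw k s

include hPnn in
private lemma exists_pos_pow [Nonempty S]
    (hirr : ∀ s s' : S, ∃ m : ℕ, 0 < (P ^ m) s s')
    (η : ℝ) (hη : 0 < η) (hdiag : ∀ s : S, η ≤ P s s) :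
    ∃ m₀ : ℕ, ∀ s s' : S, 0 < (P ^ m₀) s s' := by
  have step : ∀ (m : ℕ) (s s' : S), 0 < (P ^ m) s s' → 0 < (P ^ (m+1)) s s' := by
    intro m s s' h
    rw [pow_succ, Matrix.mul_apply]
    have hpos : 0 < (P ^ m) s s' * P s' s' := mul_pos h (lt_of_lt_of_le hη (hdiag s'))
    refine lt_of_lt_of_le hpos ?_
    exact Finset.single_le_sum
      (f := fun t => (P ^ m) s t * P t s')
      (fun t _ => mul_nonneg (pow_entry_nonneg P hPnn m s t) (hPnn t s'))
      (Finset.mem_univ s')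
  have mono : ∀ (m m' : ℕ), m ≤ m' → ∀ s s' : S, 0 < (P ^ m) s s' → 0 < (P ^ m') s s' := by
    intro m m' h
    induction m' with
    | zero => intro s s' hp; have : m = 0 := by omega
              rwa [this] at hp
    | succ m' ih =>
        intro s s' hp
        rcases Nat.lt_or_ge m (m' + 1) with h' | h'
        · exact step m' s s' (ih (by omega) s s' hp)
        · have : m = m' + 1 := by omega
          rwa [this] at hp
  choose m hm using hirr
  refine ⟨Finset.univ.sup (fun p : S × S => m p.1 p.2), fun s s' => ?_⟩
  exact mono _ _ (Finset.le_sup (f := fun p : S × S => m p.1 p.2)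
    (Finset.mem_univ (s, s'))) s s' (hm s s')

include hPnn hProw in
private lemma pow_ge_beta (m₀ : ℕ) (β : ℝ) (hβnn : 0 ≤ β)
    (hβ : ∀ s s', β ≤ (P ^ m₀) s s') :
    ∀ (j : ℕ), m₀ ≤ j → ∀ s s' : S, β ≤ (P ^ j) s s' := by
  intro j hj s s'
  have hsplit : P ^ j = P ^ (j - m₀) * P ^ m₀ := by
    rw [← pow_add]; congr 1; omega
  rw [hsplit, Matrix.mul_apply]
  calc β = (∑ t : S, (P ^ (j - m₀)) s t) * β := by rw [pow_row_sum P hProw, one_mul]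
    _ = ∑ t : S, (P ^ (j - m₀)) s t * β := by rw [Finset.sum_mul]
    _ ≤ ∑ t : S, (P ^ (j - m₀)) s t * (P ^ m₀) t s' :=
        Finset.sum_le_sum fun t _ =>
          mul_le_mul_of_nonneg_left (hβ t s') (pow_entry_nonneg P hPnn (j - m₀) s t)

end

section
variable {S : Type*} [Fintype S] [DecidableEq S]

private lemma weight_nonneg (n : ℕ) (ν : S → ℝ) (P : Matrix S S ℝ)
    (hν : ∀ s, 0 ≤ ν s) (hPnn : ∀ s s' : S, 0 ≤ P s s') (f : Fin (n+1) → S) :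
    0 ≤ mjpPathWeight n ν P f :=
  mul_nonneg (hν _) (Finset.prod_nonneg fun i _ => hPnn _ _)

private lemma prob_eq (n : ℕ) (ν : S → ℝ) (P : Matrix S S ℝ) (a b : S) :
    mjpProb n ν P (fun f => f 0 = a ∧ f (Fin.last n) = b) = ν a * (P ^ n) a b := by
  classical
  unfold mjpProb mjpPathWeight
  trans (∑ f : Fin (n+1) → S, ν a *
      (if f 0 = a ∧ f (Fin.last n) = b then ∏ i : Fin n, P (f i.castSucc) (f i.succ) else 0))
  · refine Finset.sum_congr rfl fun f _ => ?_
    split_ifs with h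
    · rw [h.1]
    · rw [mul_zero]
  · rw [← Finset.mul_sum, path_sum n (fun _ => P) a b, List.ofFn_const, List.prod_replicate]

private lemma nojump_sum (n : ℕ) (ν : S → ℝ) (P : Matrix S S ℝ) (a b : S) (k : Fin n) :
    mjpProb n ν P
      (fun f => (f 0 = a ∧ f (Fin.last n) = b) ∧ f k.succ = f k.castSucc)
      = ν a * (P ^ (k : ℕ) * Matrix.diagonal (fun s => P s s) * P ^ (n - 1 - (k : ℕ))) a b := by
  classical
  unfold mjpProb mjpPathWeight
  trans (∑ f : Fin (n+1) → S, ν a *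
      (if f 0 = a ∧ f (Fin.last n) = b then
        ∏ i : Fin n,
          (if (i : ℕ) = (k : ℕ) then Matrix.diagonal (fun s => P s s) else P)
            (f i.castSucc) (f i.succ) else 0))
  · refine Finset.sum_congr rfl fun f _ => ?_
    by_cases hE : f 0 = a ∧ f (Fin.last n) = b
    · by_cases hj : f k.succ = f k.castSucc
      · rw [if_pos ⟨hE, hj⟩, if_pos hE, hE.1]
        congr 1
        refine Finset.prod_congr rfl fun i _ => ?_
        by_cases hik : (i : ℕ) = (k : ℕ)
        · have hik' : i = k := Fin.ext hik
          subst hik'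
          rw [if_pos rfl, hj, Matrix.diagonal_apply_eq]
        · rw [if_neg hik]
      · rw [if_neg (by tauto), if_pos hE]
        have hzero : (if (k : ℕ) = (k : ℕ) then Matrix.diagonal (fun s => P s s) else P)
            (f k.castSucc) (f k.succ) = 0 := by
          rw [if_pos rfl]
          exact Matrix.diagonal_apply_ne _ (fun h => hj h.symm)
        rw [Finset.prod_eq_zero (Finset.mem_univ k) hzero, mul_zero]
    · rw [if_neg (by tauto), if_neg hE, mul_zero]
  · rw [← Finset.mul_sum,
      path_sum n (fun i => if (i : ℕ) = (k : ℕ) then Matrix.diagonal (fun s => P s s) else P) a b,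
      ofFn_ite_prod P (Matrix.diagonal (fun s => P s s)) n (k : ℕ) k.isLt]

private lemma sandwich (P : Matrix S S ℝ) (hPnn : ∀ s s' : S, 0 ≤ P s s')
    (η : ℝ) (hdiag : ∀ s : S, η ≤ P s s) (k m : ℕ) (a b : S) :
    η * (P ^ (k + m)) a b ≤ (P ^ k * Matrix.diagonal (fun s => P s s) * P ^ m) a b := by
  rw [Matrix.mul_apply, pow_add, Matrix.mul_apply, Finset.mul_sum]
  refine Finset.sum_le_sum fun u _ => ?_
  rw [Matrix.mul_diagonal]
  have h1 : 0 ≤ (P ^ k) a u := pow_entry_nonneg P hPnn k a u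
  have h2 : 0 ≤ (P ^ m) u b := pow_entry_nonneg P hPnn m u b
  have h3 : η ≤ P u u := hdiag u
  nlinarith [mul_nonneg h1 h2]

private lemma prob_split (n : ℕ) (ν : S → ℝ) (P : Matrix S S ℝ)
    (E : (Fin (n+1) → S) → Prop) (F : (Fin (n+1) → S) → Prop) :
    mjpProb n ν P (fun f => E f ∧ F f) + mjpProb n ν P (fun f => E f ∧ ¬ F f)
      = mjpProb n ν P E := by
  classical
  unfold mjpProb
  rw [← Finset.sum_add_distrib]
  refine Finset.sum_congr rfl fun f _ => ?_
  by_cases hE : E f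
  · by_cases hF : F f
    · rw [if_pos ⟨hE, hF⟩, if_neg (by tauto), if_pos hE, add_zero]
    · rw [if_neg (by tauto), if_pos ⟨hE, hF⟩, if_pos hE, zero_add]
  · rw [if_neg (by tauto), if_neg (by tauto), if_neg hE, add_zero]

end

/-- **Two-endpoint jump bound** (Lemma 1 of Miasojedow–Niemiro).
If `P` is an irreducible stochastic matrix on a finite state space with
`P(s,s) ≥ η > 0` for all `s`, then there are `n₀` and `δ > 0` (depending only on `P`
and `η`) such that for every initial distribution, every `n ≥ n₀` and all states
`s₀, sn` with `P(S_0 = s₀, S_n = sn) > 0`, one has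
`E(|J| | S_0 = s₀, S_n = sn) ≤ (1 - δ) n`. -/
theorem two_endpoint_jump_bound
    {S : Type*} [Fintype S] [DecidableEq S]
    (P : Matrix S S ℝ) (η : ℝ)
    (hPnn : ∀ s s' : S, 0 ≤ P s s')
    (hProw : ∀ s : S, ∑ s' : S, P s s' = 1)
    (hirr : ∀ s s' : S, ∃ m : ℕ, 0 < (P ^ m) s s')
    (hη : 0 < η) (hdiag : ∀ s : S, η ≤ P s s) :
    ∃ (n₀ : ℕ) (δ : ℝ), 0 < δ ∧
      ∀ (ν : S → ℝ), (∀ s, 0 ≤ ν s) → (∑ s, ν s = 1) →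
        ∀ n : ℕ, n₀ ≤ n → ∀ s₀ sn : S,
          0 < mjpProb n ν P (fun f => f 0 = s₀ ∧ f (Fin.last n) = sn) →
          mjpCondExp n ν P (fun f => (numJumps n f : ℝ))
              (fun f => f 0 = s₀ ∧ f (Fin.last n) = sn)
            ≤ (1 - δ) * n := by
  classical
  rcases isEmpty_or_nonempty S with hS | hS
  · exact ⟨0, 1, one_pos, fun ν _ _ n _ s₀ _ _ => (IsEmpty.false s₀).elim⟩
  obtain ⟨m₀, hm₀⟩ := exists_pos_pow P hPnn hirr η hη hdiag
  set β : ℝ := Finset.univ.inf' Finset.univ_nonempty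
    (fun p : S × S => (P ^ m₀) p.1 p.2) with hβdef
  have hβpos : 0 < β := by
    rw [hβdef, Finset.lt_inf'_iff]
    exact fun p _ => hm₀ p.1 p.2
  have hβle : ∀ s s' : S, β ≤ (P ^ m₀) s s' := fun s s' =>
    Finset.inf'_le _ (Finset.mem_univ (s, s'))
  have hβ1 : β ≤ 1 := by
    obtain ⟨s⟩ := hS
    exact le_trans (hβle s s) (pow_entry_le_one P hPnn hProw m₀ s s)
  refine ⟨m₀ + 1, η * β ^ 2, by positivity, ?_⟩
  intro ν hν hνsum n hn s₀ sn hZ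
  set δ : ℝ := η * β ^ 2 with hδdef
  set E : (Fin (n+1) → S) → Prop := fun f => f 0 = s₀ ∧ f (Fin.last n) = sn with hE
  have hZeq : mjpProb n ν P E = ν s₀ * (P ^ n) s₀ sn := prob_eq n ν P s₀ sn
  have key : ∀ i : Fin n,
      mjpProb n ν P (fun f => E f ∧ f i.succ ≠ f i.castSucc)
        ≤ (1 - δ) * mjpProb n ν P E := by
    intro i
    have hsplit := prob_split n ν P E (fun f => f i.succ ≠ f i.castSucc)
    have hnear : mjpProb n ν P (fun f => E f ∧ ¬ f i.succ ≠ f i.castSucc)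
        = mjpProb n ν P (fun f => E f ∧ f i.succ = f i.castSucc) := by
      unfold mjpProb
      refine Finset.sum_congr rfl fun f _ => ?_
      exact @if_congr _ _ _ (Classical.propDecidable _) (Classical.propDecidable _)
        _ _ _ _ (by tauto) rfl rfl
    have hno : mjpProb n ν P (fun f => E f ∧ f i.succ = f i.castSucc)
        = ν s₀ * (P ^ (i : ℕ) * Matrix.diagonal (fun s => P s s)
            * P ^ (n - 1 - (i : ℕ))) s₀ sn := nojump_sum n ν P s₀ sn i
    have hlow : δ * mjpProb n ν P E
        ≤ mjpProb n ν P (fun f => E f ∧ f i.succ = f i.castSucc) := by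
      rw [hno, hZeq]
      have h1 : η * (P ^ ((i : ℕ) + (n - 1 - (i : ℕ)))) s₀ sn
          ≤ (P ^ (i : ℕ) * Matrix.diagonal (fun s => P s s)
              * P ^ (n - 1 - (i : ℕ))) s₀ sn :=
        sandwich P hPnn η hdiag (i : ℕ) (n - 1 - (i : ℕ)) s₀ sn
      have hin : (i : ℕ) + (n - 1 - (i : ℕ)) = n - 1 := by
        have := i.isLt; omega
      rw [hin] at h1
      have h2 : β ≤ (P ^ (n - 1)) s₀ sn :=
        pow_ge_beta P hPnn hProw m₀ β hβpos.le hβle (n - 1) (by omega) s₀ sn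
      have h3 : (P ^ n) s₀ sn ≤ 1 := pow_entry_le_one P hPnn hProw n s₀ sn
      have h4 : 0 ≤ (P ^ n) s₀ sn := pow_entry_nonneg P hPnn n s₀ sn
      have h5 : 0 ≤ ν s₀ := hν s₀
      have h6 : δ * (P ^ n) s₀ sn ≤ η * (P ^ (n-1)) s₀ sn := by
        rw [hδdef]
        nlinarith [mul_le_mul_of_nonneg_left h3
            (le_of_lt (mul_pos hη (mul_pos hβpos hβpos))),
          mul_le_mul_of_nonneg_left h2 hη.le,
          mul_le_mul_of_nonneg_left hβ1 (mul_pos hη hβpos).le]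
      calc δ * (ν s₀ * (P ^ n) s₀ sn) = ν s₀ * (δ * (P ^ n) s₀ sn) := by ring
        _ ≤ ν s₀ * (η * (P ^ (n-1)) s₀ sn) := mul_le_mul_of_nonneg_left h6 h5
        _ ≤ ν s₀ * (P ^ (i : ℕ) * Matrix.diagonal (fun s => P s s)
            * P ^ (n - 1 - (i : ℕ))) s₀ sn := mul_le_mul_of_nonneg_left h1 h5
    have hexp : (1 - δ) * mjpProb n ν P E = mjpProb n ν P E - δ * mjpProb n ν P E := by
      ring
    linarith [hsplit, hnear, hlow, hexp]
  unfold mjpCondExp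
  rw [div_le_iff₀ hZ]
  beta_reduce
  have hNum : (∑ f : Fin (n+1) → S,
      @ite ℝ (E f) (Classical.propDecidable (E f))
        ((numJumps n f : ℝ) * mjpPathWeight n ν P f) 0)
      = ∑ i : Fin n, mjpProb n ν P (fun f => E f ∧ f i.succ ≠ f i.castSucc) := by
    unfold mjpProb
    rw [Finset.sum_comm]
    refine Finset.sum_congr rfl fun f _ => ?_
    by_cases hEf : E f
    · rw [if_pos hEf]
      trans (∑ i : Fin n, if f i.succ ≠ f i.castSucc then mjpPathWeight n ν P f else 0)
      · unfold numJumps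
        rw [← Finset.sum_filter, Finset.sum_const, nsmul_eq_mul]
      · exact Finset.sum_congr rfl fun i _ =>
          @if_congr _ _ _ _ (Classical.propDecidable _) _ _ _ _
            ((and_iff_right hEf).symm) rfl rfl
    · rw [if_neg hEf]
      exact (Finset.sum_eq_zero fun i _ => if_neg (by tauto)).symm
  refine le_trans (le_of_eq hNum) ?_
  refine le_trans (Finset.sum_le_sum fun i _ => key i) ?_
  rw [Finset.sum_const, Finset.card_univ, Fintype.card_fin, nsmul_eq_mul]
  exact le_of_eq (by ring)
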